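/- Fix a ∈ ℝ, b, c ∈ ℂ and E ∈ ℝ. There exists a nonzero ℓ²-solution of the half-line eigenvalue equation if and only if one of the following holds: (a) c = 0 and E² = a² + |b|² + 1, in which case Sol(a, b, 0, E) is infinite-dimensional; (b) b = 0, a = 0, E = 0 and |c| < 1, in which case Sol(0, 0, c, 0) is two-dimensional; (c) |c| < 1, E ≠ 0 and E² = a² + |b|², in which case Sol(a, b, c, E) is one-dimensional. -/

import Mathlib

noncomputable section

open scoped ComplexConjugate

/-- The on-site matrix `V` of the local model. -/
def Vmat (a : ℝ) (b c : ℂ) : Matrix (Fin 4) (Fin 4) ℂ :=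
  !![(a : ℂ), conj c, 0, conj b;
     c, -(a : ℂ), conj b, 0;
     0, b, (a : ℂ), -c;
     b, 0, -(conj c), -(a : ℂ)]

/-- The hopping matrix `A` of the local model. -/
def Amat : Matrix (Fin 4) (Fin 4) ℂ :=
  !![0, -1, 0, 0;
     0, 0, 0, 0;
     0, 0, 0, 0;
     0, 0, 1, 0]

/-- `ψ : ℕ → (Fin 4 → ℂ)` (with `ψ n` standing for the value at the site `n + 1` of the
half-line `{1, 2, 3, …}`) solves the half-line eigenvalue equation `(H♯ − E)ψ = 0`:
`(V − E·I)ψ(1) + A*ψ(2) = 0` and `Aψ(n) + (V − E·I)ψ(n+1) + A*ψ(n+2) = 0` for all `n ≥ 1`. -/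
def IsSolSeq (a : ℝ) (b c : ℂ) (E : ℝ) (ψ : ℕ → Fin 4 → ℂ) : Prop :=
  (Vmat a b c - (E : ℂ) • 1).mulVec (ψ 0) + (Amat.conjTranspose).mulVec (ψ 1) = 0 ∧
    ∀ n : ℕ,
      Amat.mulVec (ψ n) + (Vmat a b c - (E : ℂ) • 1).mulVec (ψ (n + 1)) +
        (Amat.conjTranspose).mulVec (ψ (n + 2)) = 0

/-- The `ℓ²` condition: `∑_{n ≥ 1} ‖ψ(n)‖² < ∞`. -/
def IsL2Seq (ψ : ℕ → Fin 4 → ℂ) : Prop :=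
  Summable fun n => ∑ i, ‖ψ n i‖ ^ 2

/-- The space `Sol(a, b, c, E)` of `ℓ²`-solutions of the half-line eigenvalue equation. -/
def Sol (a : ℝ) (b c : ℂ) (E : ℝ) : Set (ℕ → Fin 4 → ℂ) :=
  {ψ | IsSolSeq a b c E ψ ∧ IsL2Seq ψ}

/-- The sequence `e₁` with `e₁(n) = (c^{n−1}, 0, 0, 0)` (convention `0⁰ = 1`). -/
def eSeq₁ (c : ℂ) : ℕ → Fin 4 → ℂ := fun n => ![c ^ n, 0, 0, 0]

/-- The sequence `e₄` with `e₄(n) = (0, 0, 0, c^{n−1})` (convention `0⁰ = 1`). -/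
def eSeq₄ (c : ℂ) : ℕ → Fin 4 → ℂ := fun n => ![0, 0, 0, c ^ n]

open Filter

lemma isSolSeq_iff (a E : ℝ) (b c : ℂ) (ψ : ℕ → Fin 4 → ℂ) :
    IsSolSeq a b c E ψ ↔
      (((a:ℂ) - E) * ψ 0 0 + conj c * ψ 0 1 + conj b * ψ 0 3 = 0 ∧
       b * ψ 0 0 - conj c * ψ 0 2 - ((a:ℂ) + E) * ψ 0 3 = 0 ∧
       (∀ n, ψ (n+1) 0 = c * ψ n 0 - ((a:ℂ) + E) * ψ n 1 + conj b * ψ n 2) ∧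
       (∀ n, ψ (n+1) 3 = -(b * ψ n 1) - ((a:ℂ) - E) * ψ n 2 + c * ψ n 3) ∧
       (∀ n, ψ n 1 = ((a:ℂ) - E) * ψ (n+1) 0 + conj c * ψ (n+1) 1 + conj b * ψ (n+1) 3) ∧
       (∀ n, ψ n 2 = -(b * ψ (n+1) 0) + conj c * ψ (n+1) 2 + ((a:ℂ) + E) * ψ (n+1) 3)) := by
  constructor
  · rintro ⟨hb, hi⟩
    have hb0 := congrFun hb 0
    have hb1 := congrFun hb 1
    have hb2 := congrFun hb 2
    have hb3 := congrFun hb 3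
    simp (config := { decide := true }) [Vmat, Amat, Matrix.mulVec, dotProduct,
      Fin.sum_univ_four, Matrix.conjTranspose_apply, Matrix.sub_apply, Matrix.smul_apply,
      Matrix.one_apply, Matrix.vecHead, Matrix.vecTail] at hb0 hb1 hb2 hb3
    have he0 := fun n => congrFun (hi n) 0
    have he1 := fun n => congrFun (hi n) 1
    have he2 := fun n => congrFun (hi n) 2
    have he3 := fun n => congrFun (hi n) 3
    simp (config := { decide := true }) [Vmat, Amat, Matrix.mulVec, dotProduct,
      Fin.sum_univ_four, Matrix.conjTranspose_apply, Matrix.sub_apply, Matrix.smul_apply,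
      Matrix.one_apply, Matrix.vecHead, Matrix.vecTail] at he0 he1 he2 he3
    refine ⟨by linear_combination hb0, by linear_combination hb3, ?_, ?_, ?_, ?_⟩
    · intro n
      cases n with
      | zero => linear_combination -hb1
      | succ m => linear_combination -(he1 m)
    · intro n
      cases n with
      | zero => linear_combination hb2
      | succ m => linear_combination he2 m
    · intro n; linear_combination -(he0 n)
    · intro n; linear_combination he3 n
  · rintro ⟨hB0, hB3, hR1, hR2, hL1, hL2⟩
    constructor
    · funext i
      fin_cases i <;>
        simp (config := { decide := true }) [Vmat, Amat, Matrix.mulVec, dotProduct,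
          Fin.sum_univ_four, Matrix.conjTranspose_apply, Matrix.sub_apply, Matrix.smul_apply,
          Matrix.one_apply, Matrix.vecHead, Matrix.vecTail]
      · linear_combination hB0
      · linear_combination -(hR1 0)
      · linear_combination hR2 0
      · linear_combination hB3
    · intro n
      funext i
      fin_cases i <;>
        simp (config := { decide := true }) [Vmat, Amat, Matrix.mulVec, dotProduct,
          Fin.sum_univ_four, Matrix.conjTranspose_apply, Matrix.sub_apply, Matrix.smul_apply,
          Matrix.one_apply, Matrix.vecHead, Matrix.vecTail]
      · linear_combination -(hL1 n)
      · linear_combination -(hR1 (n+1))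
      · linear_combination hR2 (n+1)
      · linear_combination hL2 n

lemma conj_mul_self (z : ℂ) : conj z * z = ((‖z‖^2 : ℝ) : ℂ) := by
  rw [mul_comm, Complex.mul_conj]
  norm_cast
  rw [Complex.normSq_eq_norm_sq]

lemma l2_tendsto (ψ : ℕ → Fin 4 → ℂ) (h : Summable fun n => ∑ i, ‖ψ n i‖ ^ 2) (i : Fin 4) :
    Tendsto (fun n => ψ n i) atTop (nhds 0) := by
  have hsum := h.tendsto_atTop_zero
  have hle : ∀ n, ‖ψ n i‖ ^ 2 ≤ ∑ j, ‖ψ n j‖ ^ 2 := fun n =>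
    Finset.single_le_sum (f := fun j => ‖ψ n j‖ ^ 2) (fun j _ => sq_nonneg _) (Finset.mem_univ i)
  have h0 : Tendsto (fun n => ‖ψ n i‖ ^ 2) atTop (nhds 0) :=
    squeeze_zero (fun n => sq_nonneg _) hle hsum
  rw [tendsto_zero_iff_norm_tendsto_zero]
  have h1 : Tendsto (fun n => Real.sqrt (‖ψ n i‖ ^ 2)) atTop (nhds (Real.sqrt 0)) :=
    (Real.continuous_sqrt.continuousAt).tendsto.comp h0
  simpa [Real.sqrt_sq (norm_nonneg _)] using h1

lemma geom_zero (x : ℕ → ℂ) (lam : ℂ) (hlam : 1 ≤ ‖lam‖)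
    (hx : ∀ n, x (n + 1) = lam * x n)
    (h0 : Tendsto x atTop (nhds 0)) : ∀ n, x n = 0 := by
  have hpow : ∀ n, x n = lam ^ n * x 0 := by
    intro n
    induction n with
    | zero => simp
    | succ n ih => rw [hx, ih]; ring
  have hge : ∀ n, ‖x 0‖ ≤ ‖x n‖ := by
    intro n
    rw [hpow n, norm_mul, norm_pow]
    nlinarith [one_le_pow₀ hlam (n := n), norm_nonneg (x 0)]
  have h0' : Tendsto (fun n => ‖x n‖) atTop (nhds 0) := by simpa using h0.norm
  have hle : ‖x 0‖ ≤ 0 := ge_of_tendsto' h0' hge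
  have hx0 : x 0 = 0 := norm_le_zero_iff.mp hle
  intro n
  rw [hpow n, hx0, mul_zero]

lemma order2_step (c K lam1 lam2 : ℂ) (hc : c ≠ 0)
    (hsum : conj c * (lam1 + lam2) = K) (hprod : conj c * (lam1 * lam2) = c)
    (h1 : 1 ≤ ‖lam1‖) (x : ℕ → ℂ)
    (hrec : ∀ n, conj c * x (n + 2) = K * x (n + 1) - c * x n)
    (h0 : Tendsto x atTop (nhds 0)) : ∀ n, x (n + 1) = lam2 * x n := by
  have hcc : conj c ≠ 0 := by simpa using hc
  set y : ℕ → ℂ := fun n => x (n + 1) - lam2 * x n with hy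
  have hystep : ∀ n, y (n + 1) = lam1 * y n := by
    intro n
    have h := hrec n
    have h2 : conj c * y (n + 1) = conj c * (lam1 * y n) := by
      simp only [hy]
      linear_combination h - x (n + 1) * hsum + x n * hprod
    exact mul_left_cancel₀ hcc h2
  have hy0 : Tendsto y atTop (nhds 0) := by
    have h1' : Tendsto (fun n => x (n + 1)) atTop (nhds 0) :=
      h0.comp (tendsto_add_atTop_nat 1)
    have h2' : Tendsto (fun n => lam2 * x n) atTop (nhds 0) := by
      simpa using h0.const_mul lam2
    simpa using h1'.sub h2'
  have := geom_zero y lam1 h1 hystep hy0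
  intro n
  have hn := this n
  simp only [hy] at hn
  linear_combination hn


lemma exists_lams (K c : ℂ) (hc : c ≠ 0) :
    ∃ lam1 lam2 : ℂ, conj c * (lam1 + lam2) = K ∧ conj c * (lam1 * lam2) = c ∧
      1 ≤ ‖lam1‖ ∧ ‖lam2‖ ≤ 1 := by
  have hcc : conj c ≠ 0 := by simpa using hc
  obtain ⟨d, hd⟩ : ∃ d : ℂ, d ^ 2 = (K / conj c) ^ 2 - 4 * (c / conj c) :=
    IsAlgClosed.exists_pow_nat_eq _ zero_lt_two
  set r1 : ℂ := (K / conj c + d) / 2 with hr1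
  set r2 : ℂ := (K / conj c - d) / 2 with hr2
  have hsum : conj c * (r1 + r2) = K := by
    rw [hr1, hr2]; field_simp; ring
  have h12 : r1 * r2 = c / conj c := by
    rw [hr1, hr2]; linear_combination (-1/4 : ℂ) * hd
  have hprod : conj c * (r1 * r2) = c := by
    rw [h12]; field_simp
  have hmul : ‖r1‖ * ‖r2‖ = 1 := by
    have h2 : ‖r1 * r2‖ = 1 := by
      rw [h12, norm_div, RCLike.norm_conj, div_self (norm_ne_zero_iff.mpr hc)]
    rw [← norm_mul, h2]
  rcases le_total ‖r1‖ ‖r2‖ with h | h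
  · refine ⟨r2, r1, by linear_combination hsum, by linear_combination hprod, ?_, ?_⟩
    · nlinarith [norm_nonneg r1, norm_nonneg r2]
    · nlinarith [norm_nonneg r1, norm_nonneg r2]
  · refine ⟨r1, r2, hsum, hprod, ?_, ?_⟩
    · nlinarith [norm_nonneg r1, norm_nonneg r2]
    · nlinarith [norm_nonneg r1, norm_nonneg r2]

lemma tail_geom (c : ℂ) (hc : c ≠ 0) (hlt : ‖c‖ < 1) (P : ℂ) (v : ℕ → ℂ)
    (hrec : ∀ n, v n = P * c ^ (n + 1) + conj c * v (n + 1))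
    (hb : P + conj c * v 0 = 0)
    (h0 : Tendsto v atTop (nhds 0)) : (∀ n, v n = 0) ∧ P = 0 := by
  have hcc : conj c ≠ 0 := by simpa using hc
  have hne1 : (1 : ℂ) - conj c * c ≠ 0 := by
    rw [conj_mul_self]
    intro h
    have h2 : ((1 - ‖c‖ ^ 2 : ℝ) : ℂ) = 0 := by push_cast at h ⊢; linear_combination h
    have h3 : (1 - ‖c‖ ^ 2 : ℝ) = 0 := by exact_mod_cast h2
    nlinarith [norm_nonneg c]
  set γ : ℂ := c * P / (1 - conj c * c) with hγdef
  have hγ : γ * (1 - conj c * c) = c * P := div_mul_cancel₀ _ hne1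
  set vt : ℕ → ℂ := fun n => v n - γ * c ^ n with hvt
  have hstep : ∀ n, vt (n + 1) = (conj c)⁻¹ * vt n := by
    intro n
    have h2 : conj c * vt (n + 1) = vt n := by
      simp only [hvt]
      have := hrec n
      linear_combination c ^ n * hγ - this
    rw [eq_inv_mul_iff_mul_eq₀ hcc]
    exact h2
  have hrat : 1 ≤ ‖(conj c)⁻¹‖ := by
    rw [norm_inv, RCLike.norm_conj]
    rw [le_inv_comm₀ one_pos (norm_pos_iff.mpr hc)]
    simpa using hlt.le
  have hvt0 : Tendsto vt atTop (nhds 0) := by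
    have h1 : Tendsto (fun n => γ * c ^ n) atTop (nhds 0) := by
      simpa using (tendsto_pow_atTop_nhds_zero_of_norm_lt_one hlt).const_mul γ
    simpa using h0.sub h1
  have hz := geom_zero vt (conj c)⁻¹ hrat hstep hvt0
  have hveq : ∀ n, v n = γ * c ^ n := by
    intro n
    have := hz n
    simp only [hvt] at this
    linear_combination this
  have hγ0 : γ = 0 := by
    have hb' : P + conj c * γ = 0 := by
      have := hb; rw [hveq 0] at this; simpa using this
    linear_combination hγ + c * hb'
  have hP0 : P = 0 := by
    have hb' : P + conj c * γ = 0 := by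
      have := hb; rw [hveq 0] at this; simpa using this
    rw [hγ0] at hb'; simpa using hb'
  exact ⟨fun n => by rw [hveq n, hγ0, zero_mul], hP0⟩

open Filter in
lemma masterLemma (a E : ℝ) (b c : ℂ) (ψ : ℕ → Fin 4 → ℂ)
    (hne : ¬(c = 0 ∧ E ^ 2 = a ^ 2 + ‖b‖ ^ 2 + 1))
    (hψ : ψ ∈ Sol a b c E) :
    ∃ α β : ℂ, (∀ n, ψ n = ![α * c ^ n, 0, 0, β * c ^ n]) ∧
      ((a : ℂ) - E) * α + conj b * β = 0 ∧ -(b * α) + ((a : ℂ) + E) * β = 0 ∧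
      (¬(α = 0 ∧ β = 0) → ‖c‖ < 1) := by
  obtain ⟨hs, hl2⟩ := hψ
  rw [isSolSeq_iff] at hs
  obtain ⟨hB0, hB3, hR1, hR2, hL1, hL2⟩ := hs
  have htend : ∀ i, Tendsto (fun n => ψ n i) atTop (nhds 0) := l2_tendsto ψ hl2
  by_cases hc : c = 0
  · subst hc
    simp only [map_zero, zero_mul, mul_zero, add_zero, zero_add, sub_zero, zero_sub] at hB0 hB3 hR1 hR2 hL1 hL2
    have hDne : ((1 : ℂ) + ((a : ℂ) ^ 2 - (E : ℂ) ^ 2 + conj b * b)) ≠ 0 := by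
      intro h
      apply hne
      refine ⟨rfl, ?_⟩
      have h2 : ((1 + (a ^ 2 - E ^ 2 + ‖b‖ ^ 2) : ℝ) : ℂ) = 0 := by
        rw [← h, conj_mul_self]; push_cast; ring
      have h3 : (1 + (a ^ 2 - E ^ 2 + ‖b‖ ^ 2) : ℝ) = 0 := by exact_mod_cast h2
      linarith
    have hu : ∀ n, ψ (n + 1) 0 = 0 := by
      intro n
      have key : ((1 : ℂ) + ((a : ℂ) ^ 2 - (E : ℂ) ^ 2 + conj b * b)) * ψ (n + 1) 0 = 0 := by
        linear_combination hR1 n - ((a : ℂ) + E) * hL1 n + conj b * hL2 n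
      exact (mul_eq_zero.mp key).resolve_left hDne
    have hw : ∀ n, ψ (n + 1) 3 = 0 := by
      intro n
      have key : ((1 : ℂ) + ((a : ℂ) ^ 2 - (E : ℂ) ^ 2 + conj b * b)) * ψ (n + 1) 3 = 0 := by
        linear_combination hR2 n - b * hL1 n - ((a : ℂ) - E) * hL2 n
      exact (mul_eq_zero.mp key).resolve_left hDne
    have hv : ∀ n, ψ n 1 = 0 := fun n => by rw [hL1 n, hu n, hw n]; ring
    have hz : ∀ n, ψ n 2 = 0 := fun n => by rw [hL2 n, hu n, hw n]; ring
    refine ⟨ψ 0 0, ψ 0 3, ?_, by linear_combination hB0, by linear_combination -hB3, ?_⟩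
    · intro n
      funext i
      fin_cases i
      · cases n with
        | zero => simp
        | succ m => simp [hu m]
      · simp [hv n]
      · simp [hz n]
      · cases n with
        | zero => simp
        | succ m => simp [hw m]
    · intro _; simpa using one_pos
  · have hcc : conj c ≠ 0 := by simpa using hc
    have hrecu : ∀ n, conj c * ψ (n + 2) 0 =
        (1 + (a : ℂ) ^ 2 - (E : ℂ) ^ 2 + conj b * b + conj c * c) * ψ (n + 1) 0 - c * ψ n 0 := by
      intro n
      linear_combination (-1 : ℂ) * hR1 n + ((a : ℂ) + E) * hL1 n - conj b * hL2 n + conj c * hR1 (n + 1)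
    have hrecw : ∀ n, conj c * ψ (n + 2) 3 =
        (1 + (a : ℂ) ^ 2 - (E : ℂ) ^ 2 + conj b * b + conj c * c) * ψ (n + 1) 3 - c * ψ n 3 := by
      intro n
      linear_combination (-1 : ℂ) * hR2 n + b * hL1 n + ((a : ℂ) - E) * hL2 n + conj c * hR2 (n + 1)
    obtain ⟨l1, l2, hsum, hprod, hl1, hl2n⟩ :=
      exists_lams (1 + (a : ℂ) ^ 2 - (E : ℂ) ^ 2 + conj b * b + conj c * c) c hc
    have hu2 : ∀ n, ψ (n + 1) 0 = l2 * ψ n 0 :=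
      order2_step c _ l1 l2 hc hsum hprod hl1 (fun n => ψ n 0) hrecu (htend 0)
    have hw2 : ∀ n, ψ (n + 1) 3 = l2 * ψ n 3 :=
      order2_step c _ l1 l2 hc hsum hprod hl1 (fun n => ψ n 3) hrecw (htend 3)
    by_cases h00 : ψ 0 0 = 0 ∧ ψ 0 3 = 0
    · have hu0 : ∀ n, ψ n 0 = 0 := by
        intro n; induction n with
        | zero => exact h00.1
        | succ m ih => rw [hu2 m, ih, mul_zero]
      have hw0 : ∀ n, ψ n 3 = 0 := by
        intro n; induction n with
        | zero => exact h00.2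
        | succ m ih => rw [hw2 m, ih, mul_zero]
      have hv0 : ∀ n, ψ n 1 = 0 := by
        have hbase : ψ 0 1 = 0 := by
          have h := hB0
          rw [hu0 0, hw0 0] at h
          have h2 : conj c * ψ 0 1 = 0 := by linear_combination h
          exact (mul_eq_zero.mp h2).resolve_left hcc
        intro n; induction n with
        | zero => exact hbase
        | succ m ih =>
          have h := hL1 m
          rw [hu0 (m+1), hw0 (m+1), ih] at h
          have h2 : conj c * ψ (m + 1) 1 = 0 := by linear_combination -h
          exact (mul_eq_zero.mp h2).resolve_left hcc
      have hz0 : ∀ n, ψ n 2 = 0 := by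
        have hbase : ψ 0 2 = 0 := by
          have h := hB3
          rw [hu0 0, hw0 0] at h
          have h2 : conj c * ψ 0 2 = 0 := by linear_combination -h
          exact (mul_eq_zero.mp h2).resolve_left hcc
        intro n; induction n with
        | zero => exact hbase
        | succ m ih =>
          have h := hL2 m
          rw [hu0 (m+1), hw0 (m+1), ih] at h
          have h2 : conj c * ψ (m + 1) 2 = 0 := by linear_combination -h
          exact (mul_eq_zero.mp h2).resolve_left hcc
      refine ⟨0, 0, ?_, by ring, by ring, fun h => absurd ⟨rfl, rfl⟩ h⟩
      intro n
      funext i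
      fin_cases i <;> simp [hu0 n, hv0 n, hz0 n, hw0 n]
    · have hchar : conj c * l2 ^ 2 - (1 + (a : ℂ) ^ 2 - (E : ℂ) ^ 2 + conj b * b + conj c * c) * l2 + c = 0 := by
        linear_combination l2 * hsum - hprod
      have key0 : ψ 0 0 * (conj c * l2 - conj c * c - ((a : ℂ) ^ 2 - (E : ℂ) ^ 2 + conj b * b)) = 0 := by
        linear_combination (-(conj c)) * hu2 0 + conj c * hR1 0 - ((a : ℂ) + E) * hB0 - conj b * hB3
      have key3 : ψ 0 3 * (conj c * l2 - conj c * c - ((a : ℂ) ^ 2 - (E : ℂ) ^ 2 + conj b * b)) = 0 := by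
        linear_combination (-(conj c)) * hw2 0 + conj c * hR2 0 - b * hB0 + ((a : ℂ) - E) * hB3
      have hfac : conj c * l2 - conj c * c - ((a : ℂ) ^ 2 - (E : ℂ) ^ 2 + conj b * b) = 0 := by
        rcases not_and_or.mp h00 with h | h
        · exact (mul_eq_zero.mp key0).resolve_left h
        · exact (mul_eq_zero.mp key3).resolve_left h
      have hl2c : l2 = c := by
        have h : c - l2 = 0 := by linear_combination hchar - l2 * hfac
        linear_combination -h
      have hlt : ‖c‖ < 1 := by
        by_contra hge
        push_neg at hge
        have h1le : (1 : ℝ) ≤ ‖l2‖ := by rw [hl2c]; exact hge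
        have hu0 := geom_zero (fun n => ψ n 0) l2 h1le hu2 (htend 0)
        have hw0 := geom_zero (fun n => ψ n 3) l2 h1le hw2 (htend 3)
        exact h00 ⟨hu0 0, hw0 0⟩
      rw [hl2c] at hu2 hw2
      have hun : ∀ n, ψ n 0 = ψ 0 0 * c ^ n := by
        intro n; induction n with
        | zero => simp
        | succ m ih => rw [hu2 m, ih]; ring
      have hwn : ∀ n, ψ n 3 = ψ 0 3 * c ^ n := by
        intro n; induction n with
        | zero => simp
        | succ m ih => rw [hw2 m, ih]; ring
      have hvrec : ∀ n, ψ n 1 = (((a : ℂ) - E) * ψ 0 0 + conj b * ψ 0 3) * c ^ (n + 1) + conj c * ψ (n + 1) 1 := by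
        intro n
        rw [hL1 n, hun (n + 1), hwn (n + 1)]; ring
      have hvb : (((a : ℂ) - E) * ψ 0 0 + conj b * ψ 0 3) + conj c * ψ 0 1 = 0 := by
        linear_combination hB0
      obtain ⟨hv0, hP0⟩ := tail_geom c hc hlt _ _ hvrec hvb (htend 1)
      have hzrec : ∀ n, ψ n 2 = (-(b * ψ 0 0) + ((a : ℂ) + E) * ψ 0 3) * c ^ (n + 1) + conj c * ψ (n + 1) 2 := by
        intro n
        rw [hL2 n, hun (n + 1), hwn (n + 1)]; ring
      have hzb : (-(b * ψ 0 0) + ((a : ℂ) + E) * ψ 0 3) + conj c * ψ 0 2 = 0 := by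
        linear_combination -hB3
      obtain ⟨hz0, hQ0⟩ := tail_geom c hc hlt _ _ hzrec hzb (htend 2)
      refine ⟨ψ 0 0, ψ 0 3, ?_, hP0, hQ0, fun _ => hlt⟩
      intro n
      funext i
      fin_cases i
      · simpa using hun n
      · simpa using hv0 n
      · simpa using hz0 n
      · simpa using hwn n

lemma geom_mem (a E : ℝ) (b c : ℂ) (α β : ℂ)
    (hP : ((a : ℂ) - E) * α + conj b * β = 0)
    (hQ : -(b * α) + ((a : ℂ) + E) * β = 0)
    (hlt : ‖c‖ < 1) :
    (fun n => ![α * c ^ n, 0, 0, β * c ^ n]) ∈ Sol a b c E := by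
  constructor
  · rw [isSolSeq_iff]
    refine ⟨?_, ?_, ?_, ?_, ?_, ?_⟩
    · simp only [Matrix.cons_val_zero, Matrix.cons_val_one, Matrix.head_cons, Matrix.cons_val_three, Matrix.cons_val_two, Matrix.tail_cons]
      linear_combination hP
    · simp only [Matrix.cons_val_zero, Matrix.cons_val_one, Matrix.head_cons, Matrix.cons_val_three, Matrix.cons_val_two, Matrix.tail_cons]
      linear_combination -hQ
    · intro n
      simp only [Matrix.cons_val_zero, Matrix.cons_val_one, Matrix.head_cons, Matrix.cons_val_two, Matrix.tail_cons]
      ring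
    · intro n
      simp only [Matrix.cons_val_zero, Matrix.cons_val_one, Matrix.head_cons, Matrix.cons_val_three, Matrix.cons_val_two, Matrix.tail_cons]
      ring
    · intro n
      simp only [Matrix.cons_val_zero, Matrix.cons_val_one, Matrix.head_cons, Matrix.cons_val_three, Matrix.cons_val_two, Matrix.tail_cons]
      linear_combination (-(c ^ (n + 1))) * hP
    · intro n
      simp only [Matrix.cons_val_zero, Matrix.cons_val_one, Matrix.head_cons, Matrix.cons_val_three, Matrix.cons_val_two, Matrix.tail_cons]
      linear_combination (-(c ^ (n + 1))) * hQ
  · have heq : (fun n => ∑ i, ‖(![α * c ^ n, 0, 0, β * c ^ n] : Fin 4 → ℂ) i‖ ^ 2)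
        = fun n => (‖α‖ ^ 2 + ‖β‖ ^ 2) * (‖c‖ ^ 2) ^ n := by
      funext n
      simp [Fin.sum_univ_four, norm_mul, mul_pow, norm_pow]
      ring
    show Summable _
    rw [heq]
    have hr : ‖c‖ ^ 2 < 1 := by nlinarith [norm_nonneg c]
    exact (summable_geometric_of_lt_one (by positivity) hr).mul_left _

def sigSol (a E : ℝ) (b : ℂ) (N : ℕ) : ℕ → Fin 4 → ℂ := fun n =>
  ![if n = N + 1 then 1 else 0, if n = N then (a : ℂ) - E else 0, if n = N then -b else 0, 0]

lemma sig_mem (a E : ℝ) (b : ℂ) (N : ℕ) (hE : E ^ 2 = a ^ 2 + ‖b‖ ^ 2 + 1) :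
    sigSol a E b N ∈ Sol a b 0 E := by
  have hE' : ((E : ℂ)) ^ 2 = (a : ℂ) ^ 2 + conj b * b + 1 := by
    rw [conj_mul_self]
    exact_mod_cast congrArg (fun x : ℝ => (x : ℂ)) hE
  constructor
  · rw [isSolSeq_iff]
    refine ⟨?_, ?_, ?_, ?_, ?_, ?_⟩
    · simp [sigSol]
    · simp [sigSol]
    · intro n
      simp only [sigSol, Matrix.cons_val_zero, Matrix.cons_val_one, Matrix.head_cons,
        Matrix.cons_val_two, Matrix.tail_cons, map_zero, zero_mul, add_left_inj]
      by_cases h : n = N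
      · subst h; simp; linear_combination -hE'
      · simp [h]
    · intro n
      simp only [sigSol, Matrix.cons_val_zero, Matrix.cons_val_one, Matrix.head_cons,
        Matrix.cons_val_three, Matrix.cons_val_two, Matrix.tail_cons]
      by_cases h : n = N
      · subst h; simp; ring
      · simp [h]
    · intro n
      simp only [sigSol, Matrix.cons_val_zero, Matrix.cons_val_one, Matrix.head_cons,
        Matrix.cons_val_three, Matrix.cons_val_two, Matrix.tail_cons, map_zero, zero_mul,
        add_left_inj]
      by_cases h : n = N
      · subst h; simp
      · simp [h]
    · intro n
      simp only [sigSol, Matrix.cons_val_zero, Matrix.cons_val_one, Matrix.head_cons,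
        Matrix.cons_val_three, Matrix.cons_val_two, Matrix.tail_cons, map_zero, zero_mul]
      by_cases h : n = N
      · subst h; simp
      · simp [h]
  · apply summable_of_ne_finset_zero (s := {N, N + 1})
    intro n hn
    simp only [Finset.mem_insert, Finset.mem_singleton, not_or] at hn
    simp [sigSol, hn.1, hn.2, Fin.sum_univ_four]

lemma sig_li (a E : ℝ) (b : ℂ) (k : ℕ) :
    LinearIndependent ℂ (fun i : Fin (k + 1) => sigSol a E b i) := by
  rw [Fintype.linearIndependent_iff]
  intro g hg j
  have h := congrFun (congrFun hg ((j : ℕ) + 1)) 0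
  simp only [Finset.sum_apply, Pi.smul_apply, sigSol, Matrix.cons_val_zero, smul_eq_mul,
    Pi.zero_apply, add_left_inj, mul_ite, mul_one, mul_zero] at h
  simp only [Fin.val_eq_val] at h
  rwa [Finset.sum_ite_eq, if_pos (Finset.mem_univ j)] at h

lemma case_a_infdim (a E : ℝ) (b c : ℂ) (hc : c = 0) (hE : E ^ 2 = a ^ 2 + ‖b‖ ^ 2 + 1) :
    ¬ ∃ s : Finset (ℕ → Fin 4 → ℂ),
      Sol a b c E ⊆ (Submodule.span ℂ (s : Set (ℕ → Fin 4 → ℂ)) : Set (ℕ → Fin 4 → ℂ)) := by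
  subst hc
  rintro ⟨s, hs⟩
  set k := s.card with hk
  have hmem : ∀ i : Fin (k + 1), sigSol a E b i ∈ Submodule.span ℂ (s : Set (ℕ → Fin 4 → ℂ)) :=
    fun i => hs (sig_mem a E b i hE)
  have hli := sig_li a E b k
  have hle : Submodule.span ℂ (Set.range fun i : Fin (k + 1) => sigSol a E b i)
      ≤ Submodule.span ℂ (s : Set (ℕ → Fin 4 → ℂ)) := by
    rw [Submodule.span_le]
    rintro _ ⟨i, rfl⟩
    exact hmem i
  have hfd : FiniteDimensional ℂ (Submodule.span ℂ (s : Set (ℕ → Fin 4 → ℂ))) :=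
    FiniteDimensional.span_of_finite ℂ (Finset.finite_toSet s)
  have h1 : Module.finrank ℂ (Submodule.span ℂ (Set.range fun i : Fin (k + 1) => sigSol a E b i)) = k + 1 := by
    rw [finrank_span_eq_card hli, Fintype.card_fin]
  have h2 := Submodule.finrank_mono hle
  have h3 : Module.finrank ℂ (Submodule.span ℂ (s : Set (ℕ → Fin 4 → ℂ))) ≤ k :=
    finrank_span_finset_le_card s
  omega

lemma det_zero (a E : ℝ) (b : ℂ) (α β : ℂ)
    (hP : ((a : ℂ) - E) * α + conj b * β = 0)
    (hQ : -(b * α) + ((a : ℂ) + E) * β = 0)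
    (hne : ¬(α = 0 ∧ β = 0)) : E ^ 2 = a ^ 2 + ‖b‖ ^ 2 := by
  have h1 : ((a : ℂ) ^ 2 - (E : ℂ) ^ 2 + conj b * b) * α = 0 := by
    linear_combination ((a : ℂ) + E) * hP - conj b * hQ
  have h2 : ((a : ℂ) ^ 2 - (E : ℂ) ^ 2 + conj b * b) * β = 0 := by
    linear_combination b * hP + ((a : ℂ) - E) * hQ
  have h3 : (a : ℂ) ^ 2 - (E : ℂ) ^ 2 + conj b * b = 0 := by
    rcases not_and_or.mp hne with h | h
    · exact (mul_eq_zero.mp h1).resolve_right h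
    · exact (mul_eq_zero.mp h2).resolve_right h
  have h4 : ((a ^ 2 - E ^ 2 + ‖b‖ ^ 2 : ℝ) : ℂ) = 0 := by
    rw [← h3, conj_mul_self]; push_cast; ring
  have h5 : (a ^ 2 - E ^ 2 + ‖b‖ ^ 2 : ℝ) = 0 := by exact_mod_cast h4
  linarith

lemma gen_exists (a E : ℝ) (b : ℂ) (hE : E ≠ 0) (hD : E ^ 2 = a ^ 2 + ‖b‖ ^ 2) :
    ∃ g1 g2 : ℂ, ((a : ℂ) - E) * g1 + conj b * g2 = 0 ∧ -(b * g1) + ((a : ℂ) + E) * g2 = 0 ∧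
      ¬(g1 = 0 ∧ g2 = 0) ∧
      ∀ α β : ℂ, ((a : ℂ) - E) * α + conj b * β = 0 → -(b * α) + ((a : ℂ) + E) * β = 0 →
        ∃ t : ℂ, α = t * g1 ∧ β = t * g2 := by
  have hD' : ((E : ℂ)) ^ 2 = (a : ℂ) ^ 2 + conj b * b := by
    rw [conj_mul_self]
    exact_mod_cast congrArg (fun x : ℝ => (x : ℂ)) hD
  by_cases hg : b = 0 ∧ E = a
  · obtain ⟨hb0, hEa⟩ := hg
    subst hb0
    subst hEa
    refine ⟨1, 0, by simp, by simp, by simp, ?_⟩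
    intro α β hP hQ
    have haE : ((E : ℂ) + E) ≠ 0 := by
      intro h
      have h2 : ((E + E : ℝ) : ℂ) = 0 := by push_cast; linear_combination h
      have h3 : E + E = 0 := by exact_mod_cast h2
      exact hE (by linarith)
    have hβ : β = 0 := by
      have h := hQ
      simp only [zero_mul, neg_zero, zero_add] at h
      exact (mul_eq_zero.mp h).resolve_left haE
    exact ⟨α, by simp, by simp [hβ]⟩
  · refine ⟨conj b, (E : ℂ) - a, by ring, by linear_combination hD', ?_, ?_⟩
    · rintro ⟨h1, h2⟩
      apply hg
      constructor
      · have : b = 0 := by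
          have := congrArg conj h1; simpa using this
        exact this
      · have : ((E : ℂ)) = (a : ℂ) := by linear_combination h2
        exact_mod_cast this
    · intro α β hP hQ
      by_cases hb : b = 0
      · have hEa : E ≠ a := fun h => hg ⟨hb, h⟩
        have hEa' : ((a : ℂ)) - E ≠ 0 := by
          intro h
          apply hEa
          have : ((a : ℝ) : ℂ) = ((E : ℝ) : ℂ) := by linear_combination h
          exact_mod_cast this.symm
        have hα : α = 0 := by
          have h := hP
          rw [hb] at h
          simp only [map_zero, zero_mul, add_zero] at h
          exact (mul_eq_zero.mp h).resolve_left hEa'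
        have hEa2 : ((E : ℂ)) - a ≠ 0 := by
          intro h
          apply hEa
          have : ((E : ℝ) : ℂ) = ((a : ℝ) : ℂ) := by linear_combination h
          exact_mod_cast this
        refine ⟨β / ((E : ℂ) - a), ?_, ?_⟩
        · rw [hα, hb]; simp
        · rw [div_mul_cancel₀ _ hEa2]
      · have hbb : conj b ≠ 0 := by simpa using hb
        refine ⟨α / conj b, (div_mul_cancel₀ _ hbb).symm, ?_⟩
        rw [div_mul_eq_mul_div, eq_div_iff hbb]
        linear_combination hP


/-- Fix `a ∈ ℝ`, `b, c ∈ ℂ` and `E ∈ ℝ`. There exists a nonzero ℓ²-solution of the half-line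
eigenvalue equation iff one of the following holds: (a) `c = 0` and `E² = a² + |b|² + 1`, in
which case `Sol(a,b,0,E)` is infinite-dimensional; (b) `b = 0`, `a = 0`, `E = 0` and
`|c| < 1`, in which case `Sol(0,0,c,0)` is two-dimensional; (c) `|c| < 1`, `E ≠ 0` and
`E² = a² + |b|²`, in which case `Sol(a,b,c,E)` is one-dimensional. -/
theorem stmt15 (a : ℝ) (b c : ℂ) (E : ℝ) :
    ((∃ ψ ∈ Sol a b c E, ψ ≠ 0) ↔
      ((c = 0 ∧ E ^ 2 = a ^ 2 + ‖b‖ ^ 2 + 1) ∨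
       (b = 0 ∧ a = 0 ∧ E = 0 ∧ ‖c‖ < 1) ∨
       (‖c‖ < 1 ∧ E ≠ 0 ∧ E ^ 2 = a ^ 2 + ‖b‖ ^ 2))) ∧
    (c = 0 → E ^ 2 = a ^ 2 + ‖b‖ ^ 2 + 1 →
      ¬ ∃ s : Finset (ℕ → Fin 4 → ℂ),
        Sol a b c E ⊆ (Submodule.span ℂ (s : Set (ℕ → Fin 4 → ℂ)) :
          Set (ℕ → Fin 4 → ℂ))) ∧
    (b = 0 → a = 0 → E = 0 → ‖c‖ < 1 →
      ∃ ψ φ : ℕ → Fin 4 → ℂ, ψ ∈ Sol a b c E ∧ φ ∈ Sol a b c E ∧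
        LinearIndependent ℂ ![ψ, φ] ∧
        Sol a b c E = {χ | ∃ z w : ℂ, χ = z • ψ + w • φ}) ∧
    (‖c‖ < 1 → E ≠ 0 → E ^ 2 = a ^ 2 + ‖b‖ ^ 2 →
      ∃ ψ : ℕ → Fin 4 → ℂ, ψ ∈ Sol a b c E ∧ ψ ≠ 0 ∧
        Sol a b c E = {χ | ∃ z : ℂ, χ = z • ψ}) := by
  refine ⟨?_, ?_, ?_, ?_⟩
  · constructor
    · rintro ⟨ψ, hψ, hne⟩
      by_cases ha : c = 0 ∧ E ^ 2 = a ^ 2 + ‖b‖ ^ 2 + 1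
      · exact Or.inl ha
      · obtain ⟨α, β, hform, hP, hQ, hlt⟩ := masterLemma a E b c ψ ha hψ
        have hαβ : ¬(α = 0 ∧ β = 0) := by
          rintro ⟨h1, h2⟩
          apply hne
          funext n i
          rw [congrFun (hform n) i, h1, h2]
          fin_cases i <;> simp
        have hlt' := hlt hαβ
        have hD := det_zero a E b α β hP hQ hαβ
        by_cases hE0 : E = 0
        · subst hE0
          have ha0 : a = 0 := by nlinarith [norm_nonneg b, sq_nonneg a]
          have hb0 : b = 0 := by
            have : ‖b‖ = 0 := by nlinarith [norm_nonneg b, sq_nonneg a]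
            exact norm_eq_zero.mp this
          exact Or.inr (Or.inl ⟨hb0, ha0, rfl, hlt'⟩)
        · exact Or.inr (Or.inr ⟨hlt', hE0, hD⟩)
    · rintro (⟨hc, hE⟩ | ⟨hb, ha, hE, hc⟩ | ⟨hc, hE, hD⟩)
      · subst hc
        refine ⟨sigSol a E b 0, sig_mem a E b 0 hE, ?_⟩
        intro h
        have h2 := congrFun (congrFun h 1) 0
        simp [sigSol] at h2
      · subst hb; subst ha; subst hE
        refine ⟨(fun n => ![(1:ℂ) * c ^ n, 0, 0, (0:ℂ) * c ^ n]),
          geom_mem 0 0 0 c 1 0 (by simp) (by simp) hc, ?_⟩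
        intro h
        have h2 := congrFun (congrFun h 0) 0
        simp at h2
      · obtain ⟨g1, g2, hgP, hgQ, hgne, -⟩ := gen_exists a E b hE hD
        refine ⟨(fun n => ![g1 * c ^ n, 0, 0, g2 * c ^ n]),
          geom_mem a E b c g1 g2 hgP hgQ hc, ?_⟩
        intro h
        apply hgne
        exact ⟨by simpa using congrFun (congrFun h 0) 0,
               by simpa using congrFun (congrFun h 0) 3⟩
  · intro hc hE; exact case_a_infdim a E b c hc hE
  · intro hb ha hE hc
    subst hb; subst ha; subst hE
    refine ⟨eSeq₁ c, eSeq₄ c, ?_, ?_, ?_, ?_⟩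
    · have h1 : eSeq₁ c = (fun n => ![(1:ℂ) * c ^ n, 0, 0, (0:ℂ) * c ^ n]) := by
        funext n i; fin_cases i <;> simp [eSeq₁]
      rw [h1]; exact geom_mem 0 0 0 c 1 0 (by simp) (by simp) hc
    · have h1 : eSeq₄ c = (fun n => ![(0:ℂ) * c ^ n, 0, 0, (1:ℂ) * c ^ n]) := by
        funext n i; fin_cases i <;> simp [eSeq₄]
      rw [h1]; exact geom_mem 0 0 0 c 0 1 (by simp) (by simp) hc
    · rw [LinearIndependent.pair_iff]
      intro s t hst
      constructor
      · have h2 := congrFun (congrFun hst 0) 0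
        simpa [eSeq₁, eSeq₄] using h2
      · have h2 := congrFun (congrFun hst 0) 3
        simpa [eSeq₁, eSeq₄] using h2
    · ext χ
      constructor
      · intro hχ
        have hne : ¬(c = 0 ∧ (0:ℝ) ^ 2 = (0:ℝ) ^ 2 + ‖(0:ℂ)‖ ^ 2 + 1) := by
          rintro ⟨-, h⟩; norm_num at h
        obtain ⟨α, β, hform, -, -, -⟩ := masterLemma 0 0 0 c χ hne hχ
        refine ⟨α, β, funext fun n => funext fun i => ?_⟩
        fin_cases i <;> simp [congrFun (hform n), eSeq₁, eSeq₄]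
      · rintro ⟨z, w, rfl⟩
        have h1 : (z • eSeq₁ c + w • eSeq₄ c) = (fun n => ![z * c ^ n, 0, 0, w * c ^ n]) := by
          funext n i; fin_cases i <;> simp [eSeq₁, eSeq₄]
        rw [h1]
        exact geom_mem 0 0 0 c z w (by simp) (by simp) hc
  · intro hc hE hD
    obtain ⟨g1, g2, hgP, hgQ, hgne, hspan⟩ := gen_exists a E b hE hD
    refine ⟨(fun n => ![g1 * c ^ n, 0, 0, g2 * c ^ n]),
      geom_mem a E b c g1 g2 hgP hgQ hc, ?_, ?_⟩
    · intro h
      apply hgne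
      exact ⟨by simpa using congrFun (congrFun h 0) 0,
             by simpa using congrFun (congrFun h 0) 3⟩
    · ext χ
      constructor
      · intro hχ
        have hne : ¬(c = 0 ∧ E ^ 2 = a ^ 2 + ‖b‖ ^ 2 + 1) := by
          rintro ⟨-, h⟩
          rw [hD] at h
          linarith
        obtain ⟨α, β, hform, hP, hQ, -⟩ := masterLemma a E b c χ hne hχ
        obtain ⟨t, h1, h2⟩ := hspan α β hP hQ
        refine ⟨t, funext fun n => funext fun i => ?_⟩
        fin_cases i <;> simp [congrFun (hform n), h1, h2, mul_assoc]
      · rintro ⟨t, rfl⟩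
        have h1 : (t • fun n => ![g1 * c ^ n, 0, 0, g2 * c ^ n] : ℕ → Fin 4 → ℂ)
            = (fun n => ![(t * g1) * c ^ n, 0, 0, (t * g2) * c ^ n]) := by
          funext n i; fin_cases i <;> simp [mul_assoc]
        rw [h1]
        exact geom_mem a E b c (t * g1) (t * g2)
          (by linear_combination t * hgP) (by linear_combination t * hgQ) hc
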